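/- A permutation π ∈ S_n is vexillary if and only if its code γ satisfies: (i) whenever i < j and γ_i ≤ γ_j, then γ_i ≤ γ_k for all k with i < k < j; (ii) whenever i < j and γ_i > γ_j, the number of k with i < k < j and γ_k < γ_j is at most γ_i − γ_j. -/
import Mathlib

open Finset


/-- The code of a permutation: γ_i = #{j > i : π j < π i}. -/
def codeA {n : ℕ} (π : Equiv.Perm (Fin n)) (i : Fin n) : ℕ :=
  (Finset.univ.filter fun j : Fin n => i < j ∧ π j < π i).card

/-- `π` avoids the pattern 2143. -/
def Avoids2143 {n : ℕ} (π : Equiv.Perm (Fin n)) : Prop :=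
  ∀ i j k l : Fin n, i < j → j < k → k < l →
    ¬ (π j < π i ∧ π i < π l ∧ π l < π k)

namespace Vex
variable {n : ℕ} (π : Equiv.Perm (Fin n))

lemma card_mono_aux {p q : Fin n → Prop} [DecidablePred p] [DecidablePred q]
    (h : ∀ x, p x → q x) : (univ.filter p).card ≤ (univ.filter q).card := by
  apply card_le_card
  intro x hx
  simp only [mem_filter, mem_univ, true_and] at hx ⊢
  exact h x hx

lemma exists_q_not_p {p q : Fin n → Prop} [DecidablePred p] [DecidablePred q]
    (h : (univ.filter p).card < (univ.filter q).card) : ∃ x, q x ∧ ¬ p x := by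
  by_contra hc
  push_neg at hc
  have := card_mono_aux (p := q) (q := p) hc
  omega

lemma card_succ_le {p : Fin n → Prop} [DecidablePred p] {s : Finset (Fin n)} {x : Fin n}
    (hx : p x) (hs : ∀ y ∈ s, p y) (hxs : x ∉ s) : s.card + 1 ≤ (univ.filter p).card := by
  have hsub : insert x s ⊆ univ.filter p := by
    intro y hy
    rcases mem_insert.1 hy with h | h
    · subst h; simp [hx]
    · simp [hs y h]
  calc s.card + 1 = (insert x s).card := (card_insert_of_notMem hxs).symm
    _ ≤ _ := card_le_card hsub

lemma ne_val {i j : Fin n} (hij : i ≠ j) : π i ≠ π j :=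
  fun h => hij (π.injective h)

lemma code_lt_desc {i j : Fin n} (hij : i < j) (hv : π j < π i) :
    codeA π j < codeA π i := by
  have h := card_succ_le (p := fun l => i < l ∧ π l < π i) (x := j)
    (s := univ.filter fun l => j < l ∧ π l < π j) ⟨hij, hv⟩ ?_ ?_
  · unfold codeA; omega
  · intro y hy
    simp only [mem_filter, mem_univ, true_and] at hy
    exact ⟨hij.trans hy.1, hy.2.trans hv⟩
  · simp

lemma lt_of_code_le {i j : Fin n} (hij : i < j) (h : codeA π i ≤ codeA π j) :
    π i < π j := by
  rcases lt_or_gt_of_ne (ne_val π (ne_of_lt hij)) with h' | h'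
  · exact h'
  · exact absurd (code_lt_desc π hij h') (by omega)

/-- Key contradiction lemma: avoidance rules out `i<k<j`, `π i < π k`,
`γ_k < γ_i`, `γ_k < γ_j`. -/
lemma aux_P (hav : Avoids2143 π) {i k j : Fin n} (hik : i < k) (hkj : k < j)
    (hv : π i < π k) (h1 : codeA π k < codeA π i) (h2 : codeA π k < codeA π j) :
    False := by
  -- find m with i < m ≤ k and π m < π i
  obtain ⟨m, hm, hm2⟩ := exists_q_not_p (p := fun l => k < l ∧ π l < π i)
      (q := fun l => i < l ∧ π l < π i) (by
    have : (univ.filter fun l : Fin n => k < l ∧ π l < π i).card ≤ codeA π k :=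
      card_mono_aux (fun x hx => ⟨hx.1, hx.2.trans hv⟩)
    unfold codeA at *; omega)
  have hmk : m ≤ k := by
    by_contra hc
    exact hm2 ⟨not_le.1 hc, hm.2⟩
  -- find l > j with π k < π l < π j
  obtain ⟨l, hl, hl2⟩ := exists_q_not_p (p := fun l => j < l ∧ π l < π k)
      (q := fun l => j < l ∧ π l < π j) (by
    have : (univ.filter fun l : Fin n => j < l ∧ π l < π k).card ≤ codeA π k :=
      card_mono_aux (fun x hx => ⟨hkj.trans hx.1, hx.2⟩)
    unfold codeA at *; omega)
  have hkl : π k < π l := by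
    have h1 : ¬ π l < π k := fun hc => hl2 ⟨hl.1, hc⟩
    exact lt_of_le_of_ne (not_lt.1 h1) (ne_val π (ne_of_lt (hkj.trans hl.1)))
  exact hav i m j l hm.1 (lt_of_le_of_lt hmk hkj) hl.1
    ⟨hm.2, hv.trans hkl, hl.2⟩

lemma forward_i (hav : Avoids2143 π) (i j k : Fin n) (hij : i < j)
    (hγ : codeA π i ≤ codeA π j) (hik : i < k) (hkj : k < j) :
    codeA π i ≤ codeA π k := by
  by_contra hki
  push_neg at hki
  have hπij : π i < π j := lt_of_code_le π hij hγ
  rcases lt_or_gt_of_ne (ne_val π (ne_of_lt hik)) with hv | hv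
  · exact aux_P π hav hik hkj hv hki (lt_of_lt_of_le hki hγ)
  · -- π k < π i
    have htail : (univ.filter fun l : Fin n => j < l ∧ π l < π i).card + 1 ≤ codeA π i := by
      apply card_succ_le (x := k) ⟨hik, hv⟩
      · intro y hy
        simp only [mem_filter, mem_univ, true_and] at hy
        exact ⟨hij.trans hy.1, hy.2⟩
      · simp only [mem_filter, mem_univ, true_and, not_and]
        intro hc; exact absurd (hkj.trans hc) (lt_irrefl k)
    obtain ⟨l, hl, hl2⟩ := exists_q_not_p (p := fun l => j < l ∧ π l < π i)
        (q := fun l => j < l ∧ π l < π j) (by unfold codeA at *; omega)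
    have hil : π i < π l := by
      have h1 : ¬ π l < π i := fun hc => hl2 ⟨hl.1, hc⟩
      exact lt_of_le_of_ne (not_lt.1 h1) (ne_val π (ne_of_lt (hij.trans hl.1)))
    exact absurd ⟨hv, hil, hl.2⟩ (hav i k j l hik hkj hl.1)

lemma forward_ii (hav : Avoids2143 π) (i j : Fin n) (hij : i < j)
    (hji : codeA π j < codeA π i) :
    (Finset.univ.filter fun k : Fin n =>
      i < k ∧ k < j ∧ codeA π k < codeA π j).card ≤ codeA π i - codeA π j := by
  set T := Finset.univ.filter fun k : Fin n =>
      i < k ∧ k < j ∧ codeA π k < codeA π j with hTdef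
  have hT1 : ∀ k ∈ T, π k < π i := by
    intro k hk
    simp only [hTdef, mem_filter, mem_univ, true_and] at hk
    obtain ⟨hik, hkj, hγ⟩ := hk
    rcases lt_or_gt_of_ne (ne_val π (ne_of_lt hik)) with hv | hv
    · exact absurd (aux_P π hav hik hkj hv (hγ.trans hji) hγ) not_false
    · exact hv
  rcases lt_or_gt_of_ne (ne_val π (ne_of_lt hij)) with hv | hv
  · -- π i < π j
    rcases T.eq_empty_or_nonempty with he | ⟨k₀, hk₀⟩
    · rw [he]; simp
    · have hk₀' := hk₀
      simp only [hTdef, mem_filter, mem_univ, true_and] at hk₀'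
      have hπk₀ : π k₀ < π i := hT1 k₀ hk₀
      have hDji : ∀ l, j < l → π l < π j → π l < π i := by
        intro l hl hlv
        rcases lt_or_gt_of_ne (ne_val π (ne_of_lt (hij.trans hl))) with h | h
        · exact absurd ⟨hπk₀, h, hlv⟩ (hav i k₀ j l hk₀'.1 hk₀'.2.1 hl)
        · exact h
      -- T ∪ D_j ⊆ D_i, disjoint
      have hdis : Disjoint T (Finset.univ.filter fun l : Fin n => j < l ∧ π l < π j) := by
        rw [Finset.disjoint_left]
        intro x hx hx'
        simp only [hTdef, mem_filter, mem_univ, true_and] at hx hx'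
        exact absurd (hx.2.1.trans hx'.1) (lt_irrefl x)
      have hsub : T ∪ (Finset.univ.filter fun l : Fin n => j < l ∧ π l < π j) ⊆
          Finset.univ.filter fun l : Fin n => i < l ∧ π l < π i := by
        intro x hx
        rcases Finset.mem_union.1 hx with h | h
        · have h2 := h
          simp only [hTdef, mem_filter, mem_univ, true_and] at h2
          simp only [mem_filter, mem_univ, true_and]
          exact ⟨h2.1, hT1 x h⟩
        · simp only [mem_filter, mem_univ, true_and] at h ⊢
          exact ⟨hij.trans h.1, hDji x h.1 h.2⟩
      have hcard := Finset.card_le_card hsub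
      rw [Finset.card_union_of_disjoint hdis] at hcard
      unfold codeA at *
      omega
  · -- π j < π i
    have hdis : Disjoint T (insert j (Finset.univ.filter fun l : Fin n => j < l ∧ π l < π j)) := by
      rw [Finset.disjoint_left]
      intro x hx hx'
      simp only [hTdef, mem_filter, mem_univ, true_and] at hx
      rcases Finset.mem_insert.1 hx' with h | h
      · exact absurd (h ▸ hx.2.1) (lt_irrefl j)
      · simp only [mem_filter, mem_univ, true_and] at h
        exact absurd (hx.2.1.trans h.1) (lt_irrefl x)
    have hsub : T ∪ (insert j (Finset.univ.filter fun l : Fin n => j < l ∧ π l < π j)) ⊆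
        Finset.univ.filter fun l : Fin n => i < l ∧ π l < π i := by
      intro x hx
      rcases Finset.mem_union.1 hx with h | h
      · have hx1 := h
        simp only [hTdef, mem_filter, mem_univ, true_and] at hx1
        simp only [mem_filter, mem_univ, true_and]
        exact ⟨hx1.1, hT1 x h⟩
      · rcases Finset.mem_insert.1 h with h' | h'
        · subst h'; simp only [mem_filter, mem_univ, true_and]
          exact ⟨hij, hv⟩
        · simp only [mem_filter, mem_univ, true_and] at h' ⊢
          exact ⟨hij.trans h'.1, h'.2.trans hv⟩
    have hcard := Finset.card_le_card hsub
    rw [Finset.card_union_of_disjoint hdis,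
        Finset.card_insert_of_notMem (by simp)] at hcard
    unfold codeA at *
    omega

lemma backward
    (h1 : ∀ i j k : Fin n, i < j → codeA π i ≤ codeA π j →
        i < k → k < j → codeA π i ≤ codeA π k)
    (h2 : ∀ i j : Fin n, i < j → codeA π j < codeA π i →
        (Finset.univ.filter fun k : Fin n =>
          i < k ∧ k < j ∧ codeA π k < codeA π j).card ≤ codeA π i - codeA π j) :
    Avoids2143 π := by
  classical
  by_contra hav
  unfold Avoids2143 at hav
  push_neg at hav
  obtain ⟨a₀, b₀, c₀, d₀, hab₀, hbc₀, hcd₀, hpat₀⟩ := hav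
  set P : Fin n → Prop := fun a => ∃ b c d : Fin n,
    a < b ∧ b < c ∧ c < d ∧ π b < π a ∧ π a < π d ∧ π d < π c with hPdef
  have hne : (Finset.univ.filter P).Nonempty :=
    ⟨a₀, by
      simp only [mem_filter, mem_univ, true_and, hPdef]
      exact ⟨b₀, c₀, d₀, hab₀, hbc₀, hcd₀, hpat₀.1, hpat₀.2.1, hpat₀.2.2⟩⟩
  set a := (Finset.univ.filter P).max' hne with hadef
  have hPa : P a := by
    have := (Finset.univ.filter P).max'_mem hne
    simpa using this
  have hmax : ∀ m, a < m → ¬ P m := by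
    intro m ham hPm
    have hma : m ≤ a := Finset.le_max' _ m (by simpa using hPm)
    exact absurd (lt_of_lt_of_le ham hma) (lt_irrefl a)
  obtain ⟨b, c, d, hab, hbc, hcd, hba, had, hdc⟩ := hPa
  have hγba : codeA π b < codeA π a := code_lt_desc π hab hba
  rcases le_or_gt (codeA π a) (codeA π c) with h | h
  · exact absurd (h1 a c b (hab.trans hbc) h hab hbc) (by omega)
  · -- γ_c < γ_a
    have hπac : π a < π c := had.trans hdc
    have hS : ∀ m : Fin n, a < m → m < c → π m < π a → codeA π m < codeA π c := by
      intro m ham hmc hma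
      have hnt : ∀ t : Fin n, m < t → π t < π m → c < t := by
        intro t hmt htm
        rcases lt_trichotomy t c with h' | h' | h'
        · exact absurd ⟨t, c, d, hmt, h', hcd, htm, hma.trans had, hdc⟩ (hmax m ham)
        · subst h'
          exact absurd (htm.trans (hma.trans hπac)) (lt_irrefl (π t))
        · exact h'
      have := card_succ_le (p := fun l : Fin n => c < l ∧ π l < π c)
        (s := Finset.univ.filter fun l : Fin n => m < l ∧ π l < π m) (x := d)
        ⟨hcd, hdc⟩ ?_ ?_
      · unfold codeA; unfold codeA at this; omega
      · intro y hy
        simp only [mem_filter, mem_univ, true_and] at hy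
        exact ⟨hnt y hy.1 hy.2, hy.2.trans (hma.trans hπac)⟩
      · simp only [mem_filter, mem_univ, true_and, not_and]
        intro _ hc
        exact absurd (hc.trans (hma.trans had)) (lt_irrefl (π d))
    set S := Finset.univ.filter fun m : Fin n => a < m ∧ m < c ∧ π m < π a with hSdef
    set Tl := Finset.univ.filter fun t : Fin n => c < t ∧ π t < π a with hTldef
    have hSU : S.card ≤ (Finset.univ.filter fun k : Fin n =>
        a < k ∧ k < c ∧ codeA π k < codeA π c).card :=
      card_mono_aux (fun x hx => ⟨hx.1, hx.2.1, hS x hx.1 hx.2.1 hx.2.2⟩)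
    have hU := h2 a c (hab.trans hbc) h
    have hSb : 1 ≤ S.card := by
      have : b ∈ S := by
        simp only [hSdef, mem_filter, mem_univ, true_and]
        exact ⟨hab, hbc, hba⟩
      exact Finset.card_pos.2 ⟨b, this⟩
    have htail : Tl.card + 1 ≤ codeA π c := by
      apply card_succ_le (x := d) ⟨hcd, hdc⟩
      · intro y hy
        simp only [hTldef, mem_filter, mem_univ, true_and] at hy
        exact ⟨hy.1, hy.2.trans hπac⟩
      · simp only [hTldef, mem_filter, mem_univ, true_and, not_and]
        intro _ hc
        exact absurd (hc.trans had) (lt_irrefl (π d))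
    have hsplit : codeA π a ≤ S.card + Tl.card := by
      have hsub : (Finset.univ.filter fun l : Fin n => a < l ∧ π l < π a) ⊆ S ∪ Tl := by
        intro l hl
        simp only [mem_filter, mem_univ, true_and] at hl
        rcases lt_trichotomy l c with h' | h' | h'
        · exact Finset.mem_union_left _ (by
            simp only [hSdef, mem_filter, mem_univ, true_and]
            exact ⟨hl.1, h', hl.2⟩)
        · subst h'
          exact absurd (hl.2.trans hπac) (lt_irrefl (π l))
        · exact Finset.mem_union_right _ (by
            simp only [hTldef, mem_filter, mem_univ, true_and]
            exact ⟨h', hl.2⟩)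
      calc codeA π a ≤ (S ∪ Tl).card := Finset.card_le_card hsub
        _ ≤ S.card + Tl.card := Finset.card_union_le _ _
    omega

end Vex

/-- π is vexillary iff its code γ satisfies:
(i) if i < j and γ_i ≤ γ_j then γ_i ≤ γ_k for all i < k < j;
(ii) if i < j and γ_i > γ_j then #{k : i < k < j, γ_k < γ_j} ≤ γ_i − γ_j. -/
theorem stmt11 {n : ℕ} (π : Equiv.Perm (Fin n)) :
    Avoids2143 π ↔
      ((∀ i j k : Fin n, i < j → codeA π i ≤ codeA π j →
          i < k → k < j → codeA π i ≤ codeA π k) ∧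
       (∀ i j : Fin n, i < j → codeA π j < codeA π i →
          (Finset.univ.filter fun k : Fin n =>
            i < k ∧ k < j ∧ codeA π k < codeA π j).card ≤ codeA π i - codeA π j)) := by
  constructor
  · intro hav
    exact ⟨Vex.forward_i π hav, Vex.forward_ii π hav⟩
  · rintro ⟨h1, h2⟩
    exact Vex.backward π h1 h2
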